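/- Fix ε ∈ (0, 1/3). There exists x₀ = x₀(ε) > 0 such that for all x ≥ x₀, setting θ₂' := ⌈ 2 x^{3/2}/(3π (1−ε)^{3/2}) + 1/2 ⌉, one has ∫_{1/2}^{θ₂'} ( x − (1−ε) ((3π/2)(z − 1/2))^{2/3} ) dz ≤ (4/(15π)) x^{5/2} (1 + 3ε) + (3/2) x. -/

import Mathlib

open Real MeasureTheory

set_option maxHeartbeats 1000000

/-- eq. Int1Bound: fix `ε ∈ (0,1/3)`. There exists `x₀ > 0` such that
for all `x ≥ x₀`, with `θ₂' := ⌈2 x^(3/2)/(3π(1−ε)^(3/2)) + 1/2⌉`,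
`∫_{1/2}^{θ₂'} (x − (1−ε)((3π/2)(z − 1/2))^(2/3)) dz ≤ (4/(15π)) x^(5/2)(1+3ε) + (3/2)x`. -/
theorem int1_bound (ε : ℝ) (hε : ε ∈ Set.Ioo (0 : ℝ) (1 / 3)) :
    ∃ x₀ > (0 : ℝ), ∀ x ≥ x₀,
      (∫ z in Set.Icc (1 / 2 : ℝ)
          ((⌈2 * x ^ ((3 : ℝ) / 2) / (3 * π * (1 - ε) ^ ((3 : ℝ) / 2)) + 1 / 2⌉₊ : ℝ)),
          (x - (1 - ε) * ((3 * π / 2) * (z - 1 / 2)) ^ ((2 : ℝ) / 3))) ≤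
        (4 / (15 * π)) * x ^ ((5 : ℝ) / 2) * (1 + 3 * ε) + (3 / 2) * x := by
  obtain ⟨hε0, hε3⟩ := hε
  have hπ : 0 < π := Real.pi_pos
  have h1ε : 0 < 1 - ε := by linarith
  set c : ℝ := (1 - ε) ^ ((3 : ℝ) / 2) with hc_def
  have hc : 0 < c := Real.rpow_pos_of_pos h1ε _
  have hkey : 1 / c ≤ 1 + 3 * ε := by
    have h2 : c ^ 2 = (1 - ε) ^ 3 := by
      rw [hc_def, ← Real.rpow_natCast ((1 - ε) ^ ((3 : ℝ) / 2)) 2, ← Real.rpow_mul h1ε.le,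
        ← Real.rpow_natCast (1 - ε) 3]
      norm_num
    have hpoly : 1 ≤ (1 - ε) ^ 3 * (1 + 3 * ε) ^ 2 := by
      nlinarith [sq_nonneg ε, sq_nonneg (ε * (1 - 3 * ε)), mul_pos hε0 hε0]
    have h3 : 1 ≤ c * (1 + 3 * ε) := by
      nlinarith [hc.le, mul_pos hc (by linarith : (0 : ℝ) < 1 + 3 * ε)]
    rw [div_le_iff₀ hc]
    nlinarith
  refine ⟨1, one_pos, fun x hx => ?_⟩
  have hx0 : (0 : ℝ) < x := lt_of_lt_of_le one_pos hx
  set L : ℝ := 2 * x ^ ((3 : ℝ) / 2) / (3 * π * c) with hL_def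
  have hL : 0 < L := by positivity
  set T : ℕ := ⌈L + 1 / 2⌉₊ with hT_def
  have hLT : L + 1 / 2 ≤ (T : ℝ) := Nat.le_ceil _
  set m : ℝ := 1 / 2 + L with hm_def
  have h12m : (1 / 2 : ℝ) ≤ m := by rw [hm_def]; linarith
  have hmT : m ≤ (T : ℝ) := by rw [hm_def]; linarith
  have h12T : (1 / 2 : ℝ) ≤ (T : ℝ) := le_trans h12m hmT
  set f : ℝ → ℝ := fun z => x - (1 - ε) * (3 * π / 2 * (z - 1 / 2)) ^ ((2 : ℝ) / 3) with hf_def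
  have cont : Continuous f := by
    apply continuous_const.sub
    apply continuous_const.mul
    exact Continuous.rpow_const (by continuity) fun z => Or.inr (by norm_num)
  have hIcc : (∫ z in Set.Icc (1 / 2 : ℝ) (T : ℝ), f z) = ∫ z in (1 / 2 : ℝ)..(T : ℝ), f z := by
    rw [MeasureTheory.integral_Icc_eq_integral_Ioc, intervalIntegral.integral_of_le h12T]
  have hsplit := intervalIntegral.integral_add_adjacent_intervals
      (a := (1 / 2 : ℝ)) (b := m) (c := (T : ℝ)) (f := f) (μ := volume)
      (cont.intervalIntegrable _ _) (cont.intervalIntegrable _ _)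
  -- base value at the crossing point
  have e1 : 3 * π / 2 * L = x ^ ((3 : ℝ) / 2) / c := by
    rw [hL_def]; field_simp
  -- the integrand is nonpositive past m
  have hval : ∀ z : ℝ, m ≤ z → f z ≤ 0 := by
    intro z hz
    have hzL : L ≤ z - 1 / 2 := by rw [hm_def] at hz; linarith
    have hbase : x ^ ((3 : ℝ) / 2) / c ≤ 3 * π / 2 * (z - 1 / 2) := by
      rw [← e1]; nlinarith
    have h1 : x / (1 - ε) ≤ (3 * π / 2 * (z - 1 / 2)) ^ ((2 : ℝ) / 3) := by
      have hr := Real.rpow_le_rpow (by positivity) hbase (by norm_num : (0 : ℝ) ≤ 2 / 3)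
      rwa [Real.div_rpow (by positivity) hc.le, ← Real.rpow_mul hx0.le, hc_def,
        ← Real.rpow_mul h1ε.le, (by norm_num : (3 : ℝ) / 2 * (2 / 3) = 1), Real.rpow_one,
        Real.rpow_one] at hr
    have h2 := mul_le_mul_of_nonneg_left h1 h1ε.le
    have h3 : (1 - ε) * (x / (1 - ε)) = x := by field_simp
    simp only [hf_def]
    linarith [h3 ▸ h2]
  have hsecond : (∫ z in m..(T : ℝ), f z) ≤ 0 := by
    have hnn : 0 ≤ ∫ z in m..(T : ℝ), -f z :=
      intervalIntegral.integral_nonneg hmT fun u hu => by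
        simpa using hval u hu.1
    rw [intervalIntegral.integral_neg] at hnn
    linarith
  -- FTC on the first piece
  set F : ℝ → ℝ := fun z =>
    x * z - (1 - ε) * (2 / (5 * π)) * (3 * π / 2 * (z - 1 / 2)) ^ ((5 : ℝ) / 3) with hF_def
  have hderiv : ∀ z ∈ Set.uIcc (1 / 2 : ℝ) m, HasDerivAt F (f z) z := by
    intro z _
    have h1 : HasDerivAt (fun z : ℝ => 3 * π / 2 * (z - 1 / 2)) (3 * π / 2) z := by
      exact (((hasDerivAt_id' z).sub_const (1 / 2)).const_mul (3 * π / 2)).congr_deriv (mul_one _)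
    have h2 : HasDerivAt (fun u : ℝ => u ^ ((5 : ℝ) / 3))
        ((5 : ℝ) / 3 * (3 * π / 2 * (z - 1 / 2)) ^ ((5 : ℝ) / 3 - 1)) (3 * π / 2 * (z - 1 / 2)) :=
      Real.hasDerivAt_rpow_const (Or.inr (by norm_num))
    have h3 := h2.comp z h1
    have h4 : HasDerivAt (fun z : ℝ => x * z) x z := by simpa using (hasDerivAt_id z).const_mul x
    have h5 := h4.sub (h3.const_mul ((1 - ε) * (2 / (5 * π))))
    refine h5.congr_deriv ?_
    rw [hf_def]
    rw [(by norm_num : (5 : ℝ) / 3 - 1 = 2 / 3)]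
    field_simp
  have hfirst : (∫ z in (1 / 2 : ℝ)..m, f z) = F m - F (1 / 2) :=
    intervalIntegral.integral_eq_sub_of_hasDerivAt hderiv (cont.intervalIntegrable _ _)
  -- compute F m - F (1/2)
  set X : ℝ := x ^ ((5 : ℝ) / 2) with hX_def
  have e3 : (1 - ε) ^ ((5 : ℝ) / 2) = (1 - ε) * c := by
    rw [hc_def, (by norm_num : (5 : ℝ) / 2 = 1 + 3 / 2), Real.rpow_add h1ε, Real.rpow_one]
  have e2 : (x ^ ((3 : ℝ) / 2) / c) ^ ((5 : ℝ) / 3) = X / ((1 - ε) * c) := by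
    rw [hX_def, ← e3, Real.div_rpow (by positivity) hc.le, ← Real.rpow_mul hx0.le, hc_def,
      ← Real.rpow_mul h1ε.le]
    norm_num
  have e4 : x * L = 2 * X / (3 * π * c) := by
    have h : x * x ^ ((3 : ℝ) / 2) = X := by
      rw [hX_def]
      nth_rewrite 1 [← Real.rpow_one x]
      rw [← Real.rpow_add hx0]
      norm_num
    rw [hL_def, ← h]
    ring
  clear_value c L m f F X
  have hFval : F m - F (1 / 2) = 4 / (15 * π) * (X / c) := by
    have e5 : (3 * π / 2 * (m - 1 / 2)) ^ ((5 : ℝ) / 3) = X / ((1 - ε) * c) := by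
      rw [hm_def, (by ring : (1 / 2 + L - 1 / 2 : ℝ) = L), e1, e2]
    have e6 : (3 * π / 2 * ((1 : ℝ) / 2 - 1 / 2)) ^ ((5 : ℝ) / 3) = 0 := by
      rw [(by ring : (3 * π / 2 * ((1 : ℝ) / 2 - 1 / 2)) = 0),
        Real.zero_rpow (by norm_num : (5 : ℝ) / 3 ≠ 0)]
    simp only [hF_def]
    rw [e5, e6, mul_zero]
    have e7 : (1 - ε) * (2 / (5 * π)) * (X / ((1 - ε) * c)) = 2 / (5 * π) * (X / c) := by
      field_simp
    have e8 : x * m = x / 2 + 2 * X / (3 * π * c) := by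
      rw [hm_def, mul_add, e4]
      ring
    rw [e7, e8]
    field_simp
    ring
  -- put everything together
  rw [hIcc, ← hsplit, hfirst, hFval]
  have hfin : 4 / (15 * π) * (X / c) ≤ 4 / (15 * π) * X * (1 + 3 * ε) := by
    have hX : (0 : ℝ) ≤ X := by rw [hX_def]; positivity
    have h1c : X / c ≤ X * (1 + 3 * ε) := by
      rw [div_eq_mul_one_div]
      exact mul_le_mul_of_nonneg_left hkey hX
    calc 4 / (15 * π) * (X / c) ≤ 4 / (15 * π) * (X * (1 + 3 * ε)) :=
          mul_le_mul_of_nonneg_left h1c (by positivity)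
      _ = 4 / (15 * π) * X * (1 + 3 * ε) := by ring
  linarith
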